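/- arXiv:2007.01896 — 2 statements merged into one kernel-verified Lean document; each statement's English description precedes it below -/
import Mathlib

section
/- (Regime B equilibria) For b = 4, the set of fixed points of the update map t_4 is exactly {0, 21, 23, 29, 42, 43, 46, 53, 58, 63}; i.e. the equilibria are pure defection, pure cooperation, the two "3-in-a-row" states 21 and 42 (one full row defects, the other full row cooperates), and the six "L-shape" states 23, 29, 43, 46, 53, 58 (exactly two adjacent cells in one row defect). -/
/-- Von Neumann neighbourhoods on the 2×3 toroidal lattice.
Index `i : Fin 6` represents cell `i+1`, so `N(1)={2,3,5}` becomes `nbrs 0 = {1,2,4}`, etc. -/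
def nbrs : Fin 6 → Finset (Fin 6)
  | 0 => {1, 2, 4}
  | 1 => {0, 3, 5}
  | 2 => {0, 3, 4}
  | 3 => {1, 2, 5}
  | 4 => {0, 2, 5}
  | 5 => {1, 3, 4}

lemma nbrs_nonempty (i : Fin 6) : (nbrs i).Nonempty := by
  fin_cases i <;> simp [nbrs]

/-- Pairwise payoff to the first argument; `true` = cooperate, `false` = defect. -/
def pay (b : ℝ) : Bool → Bool → ℝ
  | false, false => 1
  | false, true  => b
  | true,  false => 0
  | true,  true  => 3

/-- Net payoff of cell `i` in state `σ`. -/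
def payoff (b : ℝ) (σ : Fin 6 → Bool) (i : Fin 6) : ℝ :=
  ∑ j ∈ nbrs i, pay b (σ i) (σ j)

/- Synchronous update map `t_b` on states: if the best payoff `m` among the
neighbours of cell `i` satisfies `m ≤ P_b(σ,i)` the cell keeps its strategy;
otherwise it cooperates iff some maximally-paid neighbour cooperates. -/
open scoped Classical in
noncomputable def update (b : ℝ) (σ : Fin 6 → Bool) : Fin 6 → Bool := fun i =>
  let m := (nbrs i).sup' (nbrs_nonempty i) fun j => payoff b σ j
  if m ≤ payoff b σ i then σ i
  else if ∃ j ∈ nbrs i, payoff b σ j = m ∧ σ j = true then true else false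

/-- Decode an integer `0 ≤ n < 64` into a state: cell 1 is the most significant bit,
bit value 1 = cooperate. -/
def dec (n : ℕ) : Fin 6 → Bool := fun i => n.testBit (5 - i.val)

/-- Encode a state as an integer via `n = Σ β(i)·2^(6−i)`. -/
def enc (σ : Fin 6 → Bool) : ℕ := ∑ i : Fin 6, if σ i then 2 ^ (5 - i.val) else 0

/-- The update map `t_b` acting on integer-coded states. -/
noncomputable def T (b : ℝ) (n : ℕ) : ℕ := enc (update b (dec n))

def payN : Bool → Bool → ℕ
  | false, false => 1
  | false, true  => 4
  | true,  false => 0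
  | true,  true  => 3

def payoffN (σ : Fin 6 → Bool) (i : Fin 6) : ℕ := ∑ j ∈ nbrs i, payN (σ i) (σ j)

def updateN (σ : Fin 6 → Bool) : Fin 6 → Bool := fun i =>
  let m := (nbrs i).sup' (nbrs_nonempty i) (payoffN σ)
  if m ≤ payoffN σ i then σ i
  else decide (∃ j ∈ nbrs i, payoffN σ j = m ∧ σ j = true)

lemma pay_eq (a b : Bool) : pay 4 a b = (payN a b : ℝ) := by
  cases a <;> cases b <;> simp [pay, payN]

lemma payoff_eq (σ : Fin 6 → Bool) (i : Fin 6) : payoff 4 σ i = (payoffN σ i : ℝ) := by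
  simp [payoff, payoffN, pay_eq, Nat.cast_sum]

lemma sup_eq (σ : Fin 6 → Bool) (i : Fin 6) :
    ((nbrs i).sup' (nbrs_nonempty i) fun j => ((payoffN σ j : ℕ) : ℝ))
      = ((((nbrs i).sup' (nbrs_nonempty i) (payoffN σ) : ℕ)) : ℝ) := by
  exact (Finset.comp_sup'_eq_sup'_comp (nbrs_nonempty i) _ (fun x y => by
    simp [Nat.cast_max])).symm

lemma update_eq (σ : Fin 6 → Bool) : update 4 σ = updateN σ := by
  funext i
  simp only [update, updateN, payoff_eq, sup_eq, Nat.cast_le, Nat.cast_inj]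
  split
  · rfl
  · by_cases h : ∃ j ∈ nbrs i, payoffN σ j = (nbrs i).sup' (nbrs_nonempty i) (payoffN σ) ∧ σ j = true
    · simp [h]
    · simp [h]

theorem stmt4 : (Finset.range 64).filter (fun n => T 4 n = n)
    = ({0, 21, 23, 29, 42, 43, 46, 53, 58, 63} : Finset ℕ) := by
  have hT : ∀ n, T 4 n = enc (updateN (dec n)) := fun n => by rw [T, update_eq]
  simp only [hT]
  decide
end

section
/- (Immunity to single-defector invasion in the weak dilemma) For b = 3, every state in which exactly one cell defects (i.e. each of the states 31, 47, 55, 59, 61, 62) is a fixed point of the update map t_3, whereas for every b > 3 no state with exactly one defecting cell is a fixed point of t_b. -/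
/-- single-defector state -/
def st (i : Fin 6) : Fin 6 → Bool := fun k => decide (k ≠ i)

lemma hcard : ∀ i : Fin 6, (nbrs i).card = 3 := by decide
lemma hirr : ∀ i : Fin 6, i ∉ nbrs i := by decide
lemma hsym : ∀ i j : Fin 6, j ∈ nbrs i → i ∈ nbrs j := by decide
lemma hwit : ∀ i k : Fin 6, k ∈ nbrs i → ∃ l ∈ nbrs k, l ≠ i ∧ i ∉ nbrs l := by decide

lemma st_self (i : Fin 6) : st i i = false := by simp [st]
lemma st_ne {i k : Fin 6} (h : k ≠ i) : st i k = true := by simp [st, h]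

lemma L1 (b : ℝ) (i : Fin 6) : payoff b (st i) i = 3 * b := by
  rw [payoff, Finset.sum_congr rfl (fun j hj => show pay b (st i i) (st i j) = b by
    have hji : j ≠ i := fun h => hirr i (h ▸ hj)
    rw [st_self, st_ne hji, pay]), Finset.sum_const, hcard]
  push_cast [nsmul_eq_mul]
  ring

lemma L2 (b : ℝ) {i k : Fin 6} (h : k ≠ i) : payoff b (st i) k ≤ 9 := by
  rw [payoff]
  calc ∑ j ∈ nbrs k, pay b (st i k) (st i j) ≤ ∑ j ∈ nbrs k, 3 := by
        refine Finset.sum_le_sum fun j _ => ?_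
        rw [st_ne h]
        cases st i j <;> simp [pay]
    _ = 9 := by rw [Finset.sum_const, hcard]; norm_num

lemma L3 (b : ℝ) {i k : Fin 6} (hk : i ∈ nbrs k) : payoff b (st i) k = 6 := by
  have hki : k ≠ i := fun h => hirr i (h ▸ hk)
  rw [payoff, ← Finset.insert_erase hk,
    Finset.sum_insert (Finset.notMem_erase _ _), st_ne hki, st_self]
  rw [Finset.sum_congr rfl (fun j hj => show pay b true (st i j) = 3 by
    rw [st_ne (Finset.ne_of_mem_erase hj), pay]), Finset.sum_const,
    Finset.card_erase_of_mem hk, hcard]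
  norm_num [pay]

lemma L4 (b : ℝ) {i k : Fin 6} (hki : k ≠ i) (hk : i ∉ nbrs k) :
    payoff b (st i) k = 9 := by
  rw [payoff, Finset.sum_congr rfl (fun j hj => show pay b (st i k) (st i j) = 3 by
    have : j ≠ i := fun h => hk (h ▸ hj)
    rw [st_ne hki, st_ne this, pay]), Finset.sum_const, hcard]
  norm_num

lemma fix3 (i : Fin 6) : update 3 (st i) = st i := by
  funext k
  simp only [update]
  by_cases hki : k = i
  · subst hki
    rw [if_pos]
    refine Finset.sup'_le _ _ fun j hj => ?_
    rw [L3 3 (hsym k j hj), L1]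
    norm_num
  · by_cases hk : k ∈ nbrs i
    · have hik : i ∈ nbrs k := hsym i k hk
      have hM : ((nbrs k).sup' (nbrs_nonempty k) fun j => payoff 3 (st i) j) = 9 := by
        refine le_antisymm (Finset.sup'_le _ _ fun j _ => ?_) ?_
        · by_cases hji : j = i
          · subst hji; rw [L1]; norm_num
          · exact L2 3 hji
        · have := Finset.le_sup' (fun j => payoff 3 (st i) j) hik
          rwa [L1, show (3:ℝ)*3 = 9 by norm_num] at this
      rw [hM, if_neg (by rw [L3 3 hik]; norm_num), if_pos, st_ne hki]
      obtain ⟨l, hl, hlne, hlnadj⟩ := hwit i k hk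
      exact ⟨l, hl, by rw [L4 3 hlne hlnadj], st_ne hlne⟩
    · rw [if_pos]
      rw [L4 3 hki (fun h => hk (hsym k i h))]
      refine Finset.sup'_le _ _ fun j _ => ?_
      by_cases hji : j = i
      · subst hji; rw [L1]; norm_num
      · exact L2 3 hji

theorem stmt13 :
    (∀ n ∈ ({31, 47, 55, 59, 61, 62} : Finset ℕ), T 3 n = n) ∧
    (∀ b : ℝ, 3 < b → ∀ σ : Fin 6 → Bool, (∃! i : Fin 6, σ i = false) →
      update b σ ≠ σ) := by
  constructor
  · intro n hn
    fin_cases hn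
    · rw [T, show dec 31 = st 0 from by decide, fix3]; decide
    · rw [T, show dec 47 = st 1 from by decide, fix3]; decide
    · rw [T, show dec 55 = st 2 from by decide, fix3]; decide
    · rw [T, show dec 59 = st 3 from by decide, fix3]; decide
    · rw [T, show dec 61 = st 4 from by decide, fix3]; decide
    · rw [T, show dec 62 = st 5 from by decide, fix3]; decide
  · rintro b hb σ ⟨i, hi, huniq⟩
    have hσ : σ = st i := by
      funext k
      by_cases hk : k = i
      · subst hk; rw [hi, st_self]
      · cases h : σ k with
        | false => exact absurd (huniq k h) hk
        | true => rw [st_ne hk]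
    subst hσ
    obtain ⟨j, hj⟩ := nbrs_nonempty i
    have hij : i ∈ nbrs j := hsym i j hj
    have hji : j ≠ i := fun h => hirr i (h ▸ hj)
    intro h
    have hcj := congrFun h j
    rw [st_ne hji] at hcj
    have hM : ((nbrs j).sup' (nbrs_nonempty j) fun k => payoff b (st i) k) = 3 * b := by
      refine le_antisymm (Finset.sup'_le _ _ fun k _ => ?_) ?_
      · by_cases hki : k = i
        · subst hki; rw [L1]
        · have := L2 b hki; linarith
      · have := Finset.le_sup' (fun k => payoff b (st i) k) hij
        rwa [L1] at this
    rw [update] at hcj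
    simp only [hM] at hcj
    rw [if_neg (by have := L2 b hji; intro hle; linarith)] at hcj
    rw [if_neg] at hcj
    · exact Bool.false_ne_true hcj
    · rintro ⟨l, hl, hpl, hcl⟩
      have hlne : l ≠ i := by
        intro h'; subst h'; rw [st_self] at hcl; exact Bool.false_ne_true hcl
      have := L2 b hlne
      rw [hpl] at this
      linarith
end
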